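/- Fix r ∈ (0,1) and let m ≥ 0 with m ≤ c_v·e^{-1-c₊·r}. If m = c_v·e^{-1-c₊·r}, then s₋(r) = e^{-1-c₊·r} is the unique s ∈ (0,∞) with λ(r,s) = -m. If 0 < m < c_v·e^{-1-c₊·r}, then the equation λ(r,s) = -m has exactly two solutions s ∈ (0,∞), one lying in the open interval (0, s₋(r)) and the other lying in the open interval (s₋(r), s̄(r)), where s̄(r) = e^{-c₊·r}. If m = 0, then s̄(r) is the unique solution. -/

import Mathlib

open Real Set

private lemma stmt6_aux (c0 cv : ℝ) (hc0 : 0 < c0) (hcv : 0 < cv)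
    (r : ℝ) (hr0 : 0 < r) :
    let f : ℝ → ℝ := fun s => c0 * r * s + cv * (s * Real.log s)
    let a : ℝ := (c0 / cv) * r
    (∀ x ≠ (0:ℝ), HasDerivAt f (c0 * r + cv * (Real.log x + 1)) x) ∧
    StrictAntiOn f (Icc 0 (Real.exp (-1 - a))) ∧
    StrictMonoOn f (Ici (Real.exp (-1 - a))) ∧
    f (Real.exp (-1 - a)) = -(cv * Real.exp (-1 - a)) ∧
    f (Real.exp (-a)) = 0 := by
  intro f a
  have hca : cv * a = c0 * r := by show cv * ((c0 / cv) * r) = c0 * r; field_simp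
  have hderiv : ∀ x ≠ (0:ℝ), HasDerivAt f (c0 * r + cv * (Real.log x + 1)) x := by
    intro x hx
    exact (((hasDerivAt_id x).const_mul (c0 * r)).add
      ((Real.hasDerivAt_mul_log hx).const_mul cv)).congr_deriv (by ring)
  have hcont : Continuous f := by
    exact (continuous_const.mul continuous_id).add
      (continuous_const.mul Real.continuous_mul_log)
  have hanti : StrictAntiOn f (Icc 0 (Real.exp (-1 - a))) := by
    apply strictAntiOn_of_deriv_neg (convex_Icc _ _) hcont.continuousOn
    intro x hx
    rw [interior_Icc] at hx
    rw [(hderiv x hx.1.ne').deriv]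
    have : Real.log x < -1 - a := (Real.log_lt_iff_lt_exp hx.1).2 hx.2
    nlinarith
  have hmono : StrictMonoOn f (Ici (Real.exp (-1 - a))) := by
    apply strictMonoOn_of_deriv_pos (convex_Ici _) hcont.continuousOn
    intro x hx
    rw [interior_Ici] at hx
    have hx0 : 0 < x := lt_trans (Real.exp_pos _) hx
    rw [(hderiv x hx0.ne').deriv]
    have : -1 - a < Real.log x := (Real.lt_log_iff_exp_lt hx0).2 hx
    nlinarith
  refine ⟨hderiv, hanti, hmono, ?_, ?_⟩
  · show c0 * r * _ + cv * (_ * Real.log (Real.exp (-1 - a))) = _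
    rw [Real.log_exp]; nlinarith [Real.exp_pos (-1 - a)]
  · show c0 * r * _ + cv * (_ * Real.log (Real.exp (-a))) = _
    rw [Real.log_exp]; nlinarith [Real.exp_pos (-a)]

/-- Solution structure of `λ(r,s) = -m` for `r ∈ (0,1)`, `0 ≤ m ≤ c_v e^{-1-c₊ r}`:
if `m = c_v e^{-1-c₊ r}`, the unique solution is `s₋(r)`; if `0 < m < c_v e^{-1-c₊ r}`,
there are exactly two solutions, one in `(0, s₋(r))`, the other in `(s₋(r), s̄(r))`;
if `m = 0`, the unique solution is `s̄(r)`. -/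
theorem stmt6 (c0 cv : ℝ) (hc0 : 0 < c0) (hcv : 0 < cv)
    (r : ℝ) (hr : r ∈ Set.Ioo (0:ℝ) 1) (m : ℝ) (hm : 0 ≤ m)
    (hm' : m ≤ cv * Real.exp (-1 - (c0 / cv) * r)) :
    (m = cv * Real.exp (-1 - (c0 / cv) * r) →
      (c0 * r * Real.exp (-1 - (c0 / cv) * r)
          + cv * Real.exp (-1 - (c0 / cv) * r) * Real.log (Real.exp (-1 - (c0 / cv) * r))
          = -m) ∧
      (∀ s ∈ Set.Ioi (0:ℝ), c0 * r * s + cv * s * Real.log s = -m →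
          s = Real.exp (-1 - (c0 / cv) * r))) ∧
    (0 < m → m < cv * Real.exp (-1 - (c0 / cv) * r) →
      ∃ s₁ s₂ : ℝ,
        s₁ ∈ Set.Ioo (0:ℝ) (Real.exp (-1 - (c0 / cv) * r)) ∧
        s₂ ∈ Set.Ioo (Real.exp (-1 - (c0 / cv) * r)) (Real.exp (-(c0 / cv) * r)) ∧
        c0 * r * s₁ + cv * s₁ * Real.log s₁ = -m ∧
        c0 * r * s₂ + cv * s₂ * Real.log s₂ = -m ∧
        ∀ s ∈ Set.Ioi (0:ℝ), c0 * r * s + cv * s * Real.log s = -m →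
          s = s₁ ∨ s = s₂) ∧
    (m = 0 →
      (c0 * r * Real.exp (-(c0 / cv) * r)
          + cv * Real.exp (-(c0 / cv) * r) * Real.log (Real.exp (-(c0 / cv) * r)) = -m) ∧
      (∀ s ∈ Set.Ioi (0:ℝ), c0 * r * s + cv * s * Real.log s = -m →
          s = Real.exp (-(c0 / cv) * r))) := by
  obtain ⟨hr0, hr1⟩ := hr
  obtain ⟨hderiv, hanti, hmono, hvmin, hvbar⟩ := stmt6_aux c0 cv hc0 hcv r hr0
  set a : ℝ := (c0 / cv) * r with ha
  set sm : ℝ := Real.exp (-1 - a) with hsm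
  set sb : ℝ := Real.exp (-a) with hsb
  set f : ℝ → ℝ := fun s => c0 * r * s + cv * (s * Real.log s) with hf
  have hsb' : Real.exp (-(c0 / cv) * r) = sb := by rw [hsb, neg_mul]
  have hsm0 : 0 < sm := Real.exp_pos _
  have hsmb : sm < sb := Real.exp_lt_exp.2 (by linarith)
  have hfeq : ∀ s, c0 * r * s + cv * s * Real.log s = f s := by
    intro s; simp only [hf]; ring
  have hcont : Continuous f := by
    exact (continuous_const.mul continuous_id).add
      (continuous_const.mul Real.continuous_mul_log)
  refine ⟨?_, ?_, ?_⟩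
  · -- m = cv * sm
    intro hmm
    constructor
    · rw [hfeq, hvmin, hmm]
    · intro s hs hfs
      rw [hfeq] at hfs
      rcases lt_trichotomy s sm with h | h | h
      · exfalso
        have := hanti ⟨le_of_lt hs, h.le⟩ ⟨hsm0.le, le_refl _⟩ h
        rw [hfs, hvmin, hmm] at this
        linarith
      · exact h
      · exfalso
        have := hmono (le_refl sm) (le_of_lt h) h
        rw [hfs, hvmin, hmm] at this
        linarith
  · -- 0 < m < cv * sm
    intro hm0 hmlt
    simp only [hsb']
    have hf0 : f 0 = 0 := by simp [hf]
    have hmem : -m ∈ Ioo (f sm) (f 0) := by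
      rw [hvmin, hf0]; constructor <;> linarith
    obtain ⟨s₁, hs₁mem, hs₁⟩ :=
      intermediate_value_Ioo' hsm0.le hcont.continuousOn hmem
    have hmem2 : -m ∈ Ioo (f sm) (f sb) := by
      rw [hvmin, hvbar]; constructor <;> linarith
    obtain ⟨s₂, hs₂mem, hs₂⟩ :=
      intermediate_value_Ioo hsmb.le hcont.continuousOn hmem2
    refine ⟨s₁, s₂, hs₁mem, hs₂mem, by rw [hfeq, hs₁], by rw [hfeq, hs₂], ?_⟩
    intro s hs hfs
    rw [hfeq] at hfs
    rcases lt_trichotomy s sm with h | h | h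
    · left
      refine hanti.injOn ⟨hs.le, h.le⟩ ⟨hs₁mem.1.le, hs₁mem.2.le⟩ ?_
      show f s = f s₁
      rw [hfs, hs₁]
    · exfalso
      rw [h, hvmin] at hfs
      linarith
    · right
      refine hmono.injOn h.le hs₂mem.1.le ?_
      show f s = f s₂
      rw [hfs, hs₂]
  · -- m = 0
    intro hmm
    constructor
    · rw [hfeq, hsb', hvbar, hmm, neg_zero]
    · intro s hs hfs
      rw [hmm, neg_zero] at hfs
      have hs0 : (0:ℝ) < s := hs
      have h0 : s * (c0 * r + cv * Real.log s) = 0 := by linarith [hfs]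
      have h2 : c0 * r + cv * Real.log s = 0 := by
        rcases mul_eq_zero.1 h0 with h | h
        · exact absurd h hs0.ne'
        · exact h
      have hlog : Real.log s = -(c0 / cv) * r := by
        field_simp
        linarith
      rw [← Real.exp_log hs0, hlog]
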